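/- Let G be a diamond-free graph that belongs to G_2. Then G is (theta, pyramid, long prism, wheel)-free. -/

import Mathlib

open SimpleGraph

namespace PaperSep

variable {V : Type} {W : Type}

/-- There is a walk from `a` to `b` in `G` all of whose vertices avoid the set `S`. -/
def ConnAvoid (G : SimpleGraph V) (S : Set V) (a b : V) : Prop :=
  ∃ p : G.Walk a b, ∀ v ∈ p.support, v ∉ S

/-- `S` is an `(a,b)`-separator of `G`. -/
def IsSep (G : SimpleGraph V) (a b : V) (S : Set V) : Prop :=
  a ∉ S ∧ b ∉ S ∧ ¬ ConnAvoid G S a b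

/-- `S` is a minimal `(a,b)`-separator of `G`. -/
def IsMinSep (G : SimpleGraph V) (a b : V) (S : Set V) : Prop :=
  IsSep G a b S ∧ ∀ T ⊂ S, ¬ IsSep G a b T

/-- `S` is a minimal separator of `G`. -/
def IsMinimalSeparator (G : SimpleGraph V) (S : Set V) : Prop :=
  ∃ a b : V, a ≠ b ∧ ¬ G.Adj a b ∧ IsMinSep G a b S

/-- `K` is a cutset of `G`, i.e. `G − K` is disconnected. -/
def IsCutset (G : SimpleGraph V) (K : Set V) : Prop :=
  ∃ a b : V, a ∉ K ∧ b ∉ K ∧ ¬ ConnAvoid G K a b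

/-- `K` is a minimal cutset of `G`. -/
def IsMinimalCutset (G : SimpleGraph V) (K : Set V) : Prop :=
  IsCutset G K ∧ ∀ T ⊂ K, ¬ IsCutset G T

/-- A class of finite graphs. -/
def GraphClass : Type 1 :=
  ∀ (α : Type) [Finite α], SimpleGraph α → Prop

/-- A class is hereditary if it is closed under isomorphism and induced subgraphs. -/
def Hereditary (C : GraphClass) : Prop :=
  ∀ (α : Type) [Finite α] (G : SimpleGraph α) (β : Type) [Finite β] (H : SimpleGraph β)
    (s : Set α), Nonempty (H ≃g G.induce s) → C α G → C β H

/-- `G ∈ 𝒢_C` : every minimal separator of `G` induces a graph in `C`. -/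
def MemGC (C : GraphClass) {α : Type} [Finite α] (G : SimpleGraph α) : Prop :=
  ∀ S : Set α, IsMinimalSeparator G S → C ↥S (G.induce S)

/-- The class `𝒢_C`. -/
def GCclass (C : GraphClass) : GraphClass :=
  fun α inst G => @MemGC C α inst G

/-- `S` is a union of `k` (possibly empty) cliques of `G`. -/
def UnionOfCliques (G : SimpleGraph V) (k : ℕ) (S : Set V) : Prop :=
  ∃ f : Fin k → Set V, (∀ i, G.IsClique (f i)) ∧ S = ⋃ i, f i

/-- `G ∈ 𝒢_k` : every minimal separator of `G` is a union of `k` cliques. -/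
def MemGk (k : ℕ) (G : SimpleGraph V) : Prop :=
  ∀ S : Set V, IsMinimalSeparator G S → UnionOfCliques G k S

/-- The class `𝒢_k`. -/
def Gkclass (k : ℕ) : GraphClass := fun _ _ G => MemGk k G

/-- The class `𝒞_k` of graphs whose vertex set is a union of `k` cliques. -/
def Ckclass (k : ℕ) : GraphClass := fun _ _ G => UnionOfCliques G k Set.univ

/-- An induced minor model of `H` in `G`. -/
def IsIMModel (G : SimpleGraph V) (H : SimpleGraph W) (X : W → Set V) : Prop :=
  (∀ w, (X w).Nonempty) ∧
  (∀ u w : W, u ≠ w → Disjoint (X u) (X w)) ∧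
  (∀ w, (G.induce (X w)).Connected) ∧
  (∀ u w : W, u ≠ w → (H.Adj u w ↔ ∃ a ∈ X u, ∃ b ∈ X w, G.Adj a b))

/-- `H` is an induced minor of `G`. -/
def IsInducedMinor (H : SimpleGraph W) (G : SimpleGraph V) : Prop :=
  ∃ X : W → Set V, IsIMModel G H X

/-- The class `C` is closed under induced minors. -/
def IMClosed (C : GraphClass) : Prop :=
  ∀ (α : Type) [Finite α] (G : SimpleGraph α) (β : Type) [Finite β] (H : SimpleGraph β),
    C α G → IsInducedMinor H G → C β H

/-- The class `C` is closed under the addition of edges. -/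
def EdgeAddClosed (C : GraphClass) : Prop :=
  ∀ (α : Type) [Finite α] (G : SimpleGraph α) (a b : α), a ≠ b → ¬ G.Adj a b →
    C α G → C α (G ⊔ SimpleGraph.edge a b)

/-- `G ∈ ℳ_C` : `G ∉ C` but every proper induced minor of `G` is in `C`.
(For finite graphs, the proper induced minors of `G` are exactly the induced minors of `G`
not isomorphic to `G`.) -/
def MemMC (C : GraphClass) {α : Type} [Finite α] (G : SimpleGraph α) : Prop :=
  ¬ C α G ∧
  ∀ (β : Type) [Finite β] (H : SimpleGraph β),
    IsInducedMinor H G → IsEmpty (H ≃g G) → C β H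

/-- The complete join of two graphs. -/
def join (G : SimpleGraph V) (H : SimpleGraph W) : SimpleGraph (V ⊕ W) :=
  SimpleGraph.fromRel (fun x y =>
    match x, y with
    | Sum.inl a, Sum.inl b => G.Adj a b
    | Sum.inr a, Sum.inr b => H.Adj a b
    | _, _ => True)

/-- The class `C` is closed under the addition of universal vertices (up to isomorphism). -/
def UnivAddClosed (C : GraphClass) : Prop :=
  ∀ (α : Type) [Finite α] (G : SimpleGraph α) (β : Type) [Finite β] (H : SimpleGraph β),
    C α G → Nonempty (H ≃g join (⊥ : SimpleGraph (Fin 1)) G) → C β H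

/-- `G` has a universal vertex. -/
def HasUniversalVertex (G : SimpleGraph V) : Prop :=
  ∃ v : V, ∀ w : V, w ≠ v → G.Adj v w



/-- `G` is a theta: two nonadjacent vertices joined by three internally disjoint induced
paths of length at least two, with no other vertices or edges
(equivalently, a subdivision of `K_{2,3}`). -/
def IsTheta (G : SimpleGraph V) : Prop :=
  ∃ (a b : V) (P₁ P₂ P₃ : G.Walk a b),
    a ≠ b ∧
    P₁.IsPath ∧ P₂.IsPath ∧ P₃.IsPath ∧
    2 ≤ P₁.length ∧ 2 ≤ P₂.length ∧ 2 ≤ P₃.length ∧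
    (∀ v : V, v ∈ P₁.support → v ∈ P₂.support → v = a ∨ v = b) ∧
    (∀ v : V, v ∈ P₁.support → v ∈ P₃.support → v = a ∨ v = b) ∧
    (∀ v : V, v ∈ P₂.support → v ∈ P₃.support → v = a ∨ v = b) ∧
    (∀ v : V, v ∈ P₁.support ∨ v ∈ P₂.support ∨ v ∈ P₃.support) ∧
    (∀ u v : V, G.Adj u v ↔
      s(u, v) ∈ P₁.edges ∨ s(u, v) ∈ P₂.edges ∨ s(u, v) ∈ P₃.edges)

/-- `G` is a pyramid: an apex `a` joined to a triangle `b₁b₂b₃` by three paths sharing only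
`a`, at least two of which have length at least two, with no other vertices or edges. -/
def IsPyramid (G : SimpleGraph V) : Prop :=
  ∃ (a b₁ b₂ b₃ : V) (P₁ : G.Walk a b₁) (P₂ : G.Walk a b₂) (P₃ : G.Walk a b₃),
    G.Adj b₁ b₂ ∧ G.Adj b₁ b₃ ∧ G.Adj b₂ b₃ ∧
    P₁.IsPath ∧ P₂.IsPath ∧ P₃.IsPath ∧
    1 ≤ P₁.length ∧ 1 ≤ P₂.length ∧ 1 ≤ P₃.length ∧
    ((2 ≤ P₁.length ∧ 2 ≤ P₂.length) ∨ (2 ≤ P₁.length ∧ 2 ≤ P₃.length) ∨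
      (2 ≤ P₂.length ∧ 2 ≤ P₃.length)) ∧
    (∀ v : V, v ∈ P₁.support → v ∈ P₂.support → v = a) ∧
    (∀ v : V, v ∈ P₁.support → v ∈ P₃.support → v = a) ∧
    (∀ v : V, v ∈ P₂.support → v ∈ P₃.support → v = a) ∧
    (∀ v : V, v ∈ P₁.support ∨ v ∈ P₂.support ∨ v ∈ P₃.support) ∧
    (∀ u v : V, G.Adj u v ↔
      s(u, v) ∈ P₁.edges ∨ s(u, v) ∈ P₂.edges ∨ s(u, v) ∈ P₃.edges ∨
      s(u, v) = s(b₁, b₂) ∨ s(u, v) = s(b₁, b₃) ∨ s(u, v) = s(b₂, b₃))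

/-- `G` is a prism: two disjoint triangles joined by three pairwise disjoint paths, with no
other vertices or edges. -/
def IsPrism (G : SimpleGraph V) : Prop :=
  ∃ (a₁ a₂ a₃ b₁ b₂ b₃ : V) (P₁ : G.Walk a₁ b₁) (P₂ : G.Walk a₂ b₂) (P₃ : G.Walk a₃ b₃),
    G.Adj a₁ a₂ ∧ G.Adj a₁ a₃ ∧ G.Adj a₂ a₃ ∧
    G.Adj b₁ b₂ ∧ G.Adj b₁ b₃ ∧ G.Adj b₂ b₃ ∧
    P₁.IsPath ∧ P₂.IsPath ∧ P₃.IsPath ∧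
    1 ≤ P₁.length ∧ 1 ≤ P₂.length ∧ 1 ≤ P₃.length ∧
    (∀ v : V, v ∈ P₁.support → v ∈ P₂.support → False) ∧
    (∀ v : V, v ∈ P₁.support → v ∈ P₃.support → False) ∧
    (∀ v : V, v ∈ P₂.support → v ∈ P₃.support → False) ∧
    (∀ v : V, v ∈ P₁.support ∨ v ∈ P₂.support ∨ v ∈ P₃.support) ∧
    (∀ u v : V, G.Adj u v ↔
      s(u, v) ∈ P₁.edges ∨ s(u, v) ∈ P₂.edges ∨ s(u, v) ∈ P₃.edges ∨
      s(u, v) = s(a₁, a₂) ∨ s(u, v) = s(a₁, a₃) ∨ s(u, v) = s(a₂, a₃) ∨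
      s(u, v) = s(b₁, b₂) ∨ s(u, v) = s(b₁, b₃) ∨ s(u, v) = s(b₂, b₃))

/-- `G` is a long prism: a prism other than the complement of `C₆`, i.e. a prism in which at
least one of the three paths has length at least two. -/
def IsLongPrism (G : SimpleGraph V) : Prop :=
  ∃ (a₁ a₂ a₃ b₁ b₂ b₃ : V) (P₁ : G.Walk a₁ b₁) (P₂ : G.Walk a₂ b₂) (P₃ : G.Walk a₃ b₃),
    G.Adj a₁ a₂ ∧ G.Adj a₁ a₃ ∧ G.Adj a₂ a₃ ∧
    G.Adj b₁ b₂ ∧ G.Adj b₁ b₃ ∧ G.Adj b₂ b₃ ∧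
    P₁.IsPath ∧ P₂.IsPath ∧ P₃.IsPath ∧
    1 ≤ P₁.length ∧ 1 ≤ P₂.length ∧ 1 ≤ P₃.length ∧
    (2 ≤ P₁.length ∨ 2 ≤ P₂.length ∨ 2 ≤ P₃.length) ∧
    (∀ v : V, v ∈ P₁.support → v ∈ P₂.support → False) ∧
    (∀ v : V, v ∈ P₁.support → v ∈ P₃.support → False) ∧
    (∀ v : V, v ∈ P₂.support → v ∈ P₃.support → False) ∧
    (∀ v : V, v ∈ P₁.support ∨ v ∈ P₂.support ∨ v ∈ P₃.support) ∧
    (∀ u v : V, G.Adj u v ↔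
      s(u, v) ∈ P₁.edges ∨ s(u, v) ∈ P₂.edges ∨ s(u, v) ∈ P₃.edges ∨
      s(u, v) = s(a₁, a₂) ∨ s(u, v) = s(a₁, a₃) ∨ s(u, v) = s(a₂, a₃) ∨
      s(u, v) = s(b₁, b₂) ∨ s(u, v) = s(b₁, b₃) ∨ s(u, v) = s(b₂, b₃))

/-- `G` is a wheel: a hole (chordless cycle of length at least four) together with one
additional vertex having at least three neighbors on the hole. -/
def IsWheel (G : SimpleGraph V) : Prop :=
  ∃ (v x : V) (c : G.Walk x x),
    c.IsCycle ∧ 4 ≤ c.length ∧ v ∉ c.support ∧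
    (∀ u : V, u = v ∨ u ∈ c.support) ∧
    (∀ u w : V, u ∈ c.support → w ∈ c.support → G.Adj u w → s(u, w) ∈ c.edges) ∧
    3 ≤ {u : V | u ∈ c.support ∧ G.Adj v u}.ncard

/-- `G` is a broken wheel: a wheel in which the neighbors of the additional vertex induce a
disconnected subgraph of the hole. -/
def IsBrokenWheel (G : SimpleGraph V) : Prop :=
  ∃ (v x : V) (c : G.Walk x x),
    c.IsCycle ∧ 4 ≤ c.length ∧ v ∉ c.support ∧
    (∀ u : V, u = v ∨ u ∈ c.support) ∧
    (∀ u w : V, u ∈ c.support → w ∈ c.support → G.Adj u w → s(u, w) ∈ c.edges) ∧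
    3 ≤ {u : V | u ∈ c.support ∧ G.Adj v u}.ncard ∧
    ¬ (G.induce {u : V | u ∈ c.support ∧ G.Adj v u}).Connected

/-- `G` is diamond-free: it has no induced subgraph isomorphic to `K₄` minus an edge. -/
def DiamondFree (G : SimpleGraph V) : Prop :=
  ¬ ∃ a b c d : V, c ≠ d ∧ G.Adj a b ∧ G.Adj a c ∧ G.Adj a d ∧ G.Adj b c ∧ G.Adj b d ∧
    ¬ G.Adj c d

/-- The short `n`-prism: two `n`-vertex cliques joined by a perfect matching. -/
def completePrism (n : ℕ) : SimpleGraph (Fin n ⊕ Fin n) :=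
  SimpleGraph.fromRel (fun x y =>
    match x, y with
    | Sum.inl _, Sum.inl _ => True
    | Sum.inr _, Sum.inr _ => True
    | Sum.inl i, Sum.inr j => i = j
    | Sum.inr i, Sum.inl j => i = j)

/-- `G` is a complete prism, i.e. a short `n`-prism for some `n ≥ 3`. -/
def IsCompletePrism (G : SimpleGraph V) : Prop :=
  ∃ n : ℕ, 3 ≤ n ∧ Nonempty (G ≃g completePrism n)

/-- `G` is a cycle. -/
def IsCycleGraph (G : SimpleGraph V) : Prop :=
  ∃ n : ℕ, 3 ≤ n ∧ Nonempty (G ≃g cycleGraph n)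

/-- `G` is a complete graph. -/
def IsCompleteGraph (G : SimpleGraph V) : Prop :=
  ∀ u v : V, u ≠ v → G.Adj u v

/-- `G` has a clique-cutset. -/
def HasCliqueCutset (G : SimpleGraph V) : Prop :=
  ∃ K : Set V, G.IsClique K ∧ IsCutset G K



section Infra

variable {G : SimpleGraph V}

open SimpleGraph.Walk

lemma path_loop_nil {a : V} {p : G.Walk a a} (hp : p.IsPath) : p = Walk.nil := by
  cases p with
  | nil => rfl
  | cons h q =>
    rw [Walk.cons_isPath_iff] at hp
    exact absurd q.end_mem_support hp.2

lemma path_loop_false {a : V} {p : G.Walk a a} (hp : p.IsPath) (hl : 1 ≤ p.length) : False := by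
  rw [path_loop_nil hp] at hl
  simp at hl

lemma start_edge_unique {a b y z : V} {p : G.Walk a b} (hp : p.IsPath)
    (hy : s(a, y) ∈ p.edges) (hz : s(a, z) ∈ p.edges) : y = z := by
  cases p with
  | nil => simp at hy
  | cons h q =>
    rename_i c
    rw [Walk.cons_isPath_iff] at hp
    have key : ∀ w : V, s(a, w) ∈ (Walk.cons h q).edges → w = c := by
      intro w hw
      rw [Walk.edges_cons, List.mem_cons] at hw
      rcases hw with hw | hw
      · rw [Sym2.eq_iff] at hw
        rcases hw with ⟨-, rfl⟩ | ⟨rfl, rfl⟩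
        · rfl
        · exact absurd h (G.loopless.irrefl _)
      · exact absurd (q.fst_mem_support_of_mem_edges hw) hp.2
    rw [key y hy, key z hz]

lemma end_edge_unique {a b y z : V} {p : G.Walk a b} (hp : p.IsPath)
    (hy : s(b, y) ∈ p.edges) (hz : s(b, z) ∈ p.edges) : y = z := by
  have hy' : s(b, y) ∈ p.reverse.edges := by rw [Walk.edges_reverse]; simpa using hy
  have hz' : s(b, z) ∈ p.reverse.edges := by rw [Walk.edges_reverse]; simpa using hz
  exact start_edge_unique hp.reverse hy' hz'

lemma endpoints_edge_length_one {a b : V} {p : G.Walk a b} (hp : p.IsPath)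
    (he : s(a, b) ∈ p.edges) : p.length = 1 := by
  cases p with
  | nil => simp at he
  | cons h q =>
    rw [Walk.cons_isPath_iff] at hp
    rw [Walk.edges_cons, List.mem_cons] at he
    rcases he with he | he
    · rw [Sym2.eq_iff] at he
      rcases he with ⟨-, rfl⟩ | ⟨rfl, rfl⟩
      · rw [path_loop_nil hp.1]; simp
      · exact absurd h (G.loopless.irrefl _)
    · exact absurd (q.fst_mem_support_of_mem_edges he) hp.2

lemma sep_hits {a b : V} {T : Set V} (h : IsSep G a b T) (p : G.Walk a b) :
    ∃ v ∈ p.support, v ∈ T := by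
  by_contra h'
  push_neg at h'
  exact h.2.2 ⟨p, h'⟩

lemma sep_hits' {a b : V} {T : Set V} (h : IsSep G a b T) (p : G.Walk a b) :
    ∃ v ∈ p.support, v ∈ T ∧ v ≠ a ∧ v ≠ b := by
  obtain ⟨v, hv, hvT⟩ := sep_hits h p
  exact ⟨v, hv, hvT, fun e => h.1 (e ▸ hvT), fun e => h.2.1 (e ▸ hvT)⟩

lemma exists_minSep_aux [Finite V] {a b : V} :
    ∀ (n : ℕ) (S0 : Set V), S0.ncard ≤ n → IsSep G a b S0 →
      ∃ T, T ⊆ S0 ∧ IsMinSep G a b T := by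
  intro n
  induction n with
  | zero =>
    intro S0 hcard hsep
    refine ⟨S0, subset_rfl, hsep, fun T hT hTsep => ?_⟩
    have h1 : T.ncard < S0.ncard := Set.ncard_lt_ncard hT (Set.toFinite _)
    omega
  | succ n ih =>
    intro S0 hcard hsep
    by_cases hmin : ∀ T ⊂ S0, ¬ IsSep G a b T
    · exact ⟨S0, subset_rfl, hsep, hmin⟩
    · push_neg at hmin
      obtain ⟨T, hT, hTsep⟩ := hmin
      have h1 : T.ncard < S0.ncard := Set.ncard_lt_ncard hT (Set.toFinite _)
      obtain ⟨T', hT', hmin'⟩ := ih T (by omega) hTsep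
      exact ⟨T', hT'.trans hT.subset, hmin'⟩

lemma exists_minSep [Finite V] {a b : V} {S0 : Set V} (hsep : IsSep G a b S0) :
    ∃ T, T ⊆ S0 ∧ IsMinSep G a b T :=
  exists_minSep_aux S0.ncard S0 le_rfl hsep

lemma two_cliques_pigeonhole {T : Set V} (h : UnionOfCliques G 2 T) {x y z : V}
    (hx : x ∈ T) (hy : y ∈ T) (hz : z ∈ T)
    (hxy : x ≠ y) (hxz : x ≠ z) (hyz : y ≠ z)
    (nxy : ¬ G.Adj x y) (nxz : ¬ G.Adj x z) (nyz : ¬ G.Adj y z) : False := by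
  obtain ⟨f, hclq, rfl⟩ := h
  rw [Set.mem_iUnion] at hx hy hz
  obtain ⟨i, hi⟩ := hx
  obtain ⟨j, hj⟩ := hy
  obtain ⟨k, hk⟩ := hz
  have htri : i = j ∨ i = k ∨ j = k := by omega
  rcases htri with rfl | rfl | rfl
  · exact nxy (hclq i hi hj hxy)
  · exact nxz (hclq i hi hk hxz)
  · exact nyz (hclq j hj hk hyz)

/-- The inclusion homomorphism from an induced subgraph. -/
def homInduce (G : SimpleGraph V) (s : Set V) : G.induce s →g G where
  toFun := Subtype.val
  map_rel' := fun h => h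

lemma induce_adj_iff {s : Set V} {x y : ↥s} : (G.induce s).Adj x y ↔ G.Adj ↑x ↑y := Iff.rfl

end Infra


section Cyc
variable {G : SimpleGraph V}
open SimpleGraph.Walk
lemma length_rotate [DecidableEq V] {x v : V} (c : G.Walk v v) (h : x ∈ c.support) :
    (c.rotate x h).length = c.length := by
  rw [show c.rotate x h = (c.dropUntil x h).append (c.takeUntil x h) from rfl,
    Walk.length_append, Nat.add_comm, ← Walk.length_append, Walk.take_spec]

lemma cycle_tail_isPath {x y : V} {h : G.Adj x y} {q : G.Walk y x}
    (hc : (Walk.cons h q).IsCycle) : q.IsPath := by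
  rw [Walk.isPath_def]
  rw [Walk.isCycle_def] at hc
  simpa using hc.2.2

lemma no_triangle_in_cycle {x : V} {c : G.Walk x x} (hc : c.IsCycle)
    (hlen : 4 ≤ c.length) {p q r : V} (hpq : p ≠ q) (hpr : p ≠ r) (hqr : q ≠ r)
    (e1 : s(p, q) ∈ c.edges) (e2 : s(p, r) ∈ c.edges) (e3 : s(q, r) ∈ c.edges) : False := by
  classical
  have hp : p ∈ c.support := c.fst_mem_support_of_mem_edges e1
  have hc2cyc : (c.rotate p hp).IsCycle := hc.rotate hp
  have hlen2 : 4 ≤ (c.rotate p hp).length := by rw [length_rotate]; exact hlen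
  have hmem : ∀ e, e ∈ c.edges → e ∈ (c.rotate p hp).edges := fun e he =>
    ((Walk.rotate_edges c p hp).mem_iff).mpr he
  have e1' := hmem _ e1
  have e2' := hmem _ e2
  have e3' := hmem _ e3
  clear e1 e2 e3 hmem hlen
  generalize hg : c.rotate p hp = c2 at hc2cyc hlen2 e1' e2' e3'
  clear hg
  cases c2 with
  | nil => simp at hlen2
  | cons h1 q0 =>
    rename_i d
    have hq0 : q0.IsPath := cycle_tail_isPath hc2cyc
    have hlen3 : 3 ≤ q0.length := by simpa [Walk.length_cons] using hlen2
    -- resolve an edge s(p, y) in (cons h1 q0).edges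
    have resolve : ∀ y : V, s(p, y) ∈ (Walk.cons h1 q0).edges → y = d ∨ s(p, y) ∈ q0.edges := by
      intro y hy
      rw [Walk.edges_cons, List.mem_cons] at hy
      rcases hy with hy | hy
      · rw [Sym2.eq_iff] at hy
        rcases hy with ⟨-, rfl⟩ | ⟨rfl, rfl⟩
        · exact Or.inl rfl
        · exact absurd h1 (G.loopless.irrefl _)
      · exact Or.inr hy
    -- main symmetric sub-argument
    have main : ∀ y z : V, y ≠ z → p ≠ y → p ≠ z → y = d → s(p, z) ∈ q0.edges →
        s(y, z) ∈ (Walk.cons h1 q0).edges → False := by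
      intro y z hyz hpy hpz hyd hz hyz_e
      subst hyd
      have hdz : s(y, z) ∈ q0.edges := by
        rw [Walk.edges_cons, List.mem_cons] at hyz_e
        rcases hyz_e with he | he
        · rw [Sym2.eq_iff] at he
          rcases he with ⟨rfl, -⟩ | ⟨-, rfl⟩
          · exact absurd rfl hpy
          · exact absurd rfl hpz
        · exact he
      cases q0 with
      | nil => simp at hdz
      | cons h2 q1 =>
        rename_i e
        have hq1 : q1.IsPath := hq0.of_cons
        have hze : z = e := by
          have hde : s(y, e) ∈ (Walk.cons h2 q1).edges := by
            rw [Walk.edges_cons]; exact List.mem_cons_self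
          exact start_edge_unique hq0 hdz hde
        subst hze
        have hpz' : s(p, z) ∈ q1.edges := by
          rw [Walk.edges_cons, List.mem_cons] at hz
          rcases hz with he | he
          · rw [Sym2.eq_iff] at he
            rcases he with ⟨hpe, -⟩ | ⟨-, hzy⟩
            · exact absurd hpe hpy
            · exact absurd hzy.symm hyz -- check
          · exact he
        cases q1 with
        | nil =>
          exact hpz rfl
        | cons h3 q2 =>
          rename_i f
          have hq2 : q2.IsPath := hq1.of_cons
          have hpf : p = f := by
            have h1' : s(z, p) ∈ (Walk.cons h3 q2).edges := by
              rw [Sym2.eq_swap] at hpz' ; exact hpz'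
            have h2' : s(z, f) ∈ (Walk.cons h3 q2).edges := by
              rw [Walk.edges_cons]; exact List.mem_cons_self
            exact start_edge_unique hq1 h1' h2'
          subst hpf
          have : q2 = Walk.nil := path_loop_nil hq2
          subst this
          simp [Walk.length_cons] at hlen3
    -- case analysis
    rcases resolve q e1' with hq | hq <;> rcases resolve r e2' with hr | hr
    · exact hqr (hq.trans hr.symm)
    · exact main q r hqr hpq hpr hq hr e3'
    · refine main r q hqr.symm hpr hpq hr hq ?_
      rw [Sym2.eq_swap]; exact e3'
    · exact hqr (start_edge_unique hq0.reverse
        (by rw [Walk.edges_reverse]; simpa using (Sym2.eq_swap ▸ hq : s(p,q) ∈ q0.edges))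
        (by rw [Walk.edges_reverse]; simpa using (Sym2.eq_swap ▸ hr : s(p,r) ∈ q0.edges)))
end Cyc


open SimpleGraph.Walk in
lemma no_theta [Finite V] {G : SimpleGraph V} (hG : MemGk 2 G) (s : Set V) :
    ¬ IsTheta (G.induce s) := by
  rintro ⟨a, b, P₁, P₂, P₃, hab, hP1, hP2, hP3, hl1, hl2, hl3, h12, h13, h23, -, hiff⟩
  have hnadj : ¬ (G.induce s).Adj a b := by
    intro h
    rcases (hiff a b).mp h with h' | h' | h'
    · have := endpoints_edge_length_one hP1 h'; omega
    · have := endpoints_edge_length_one hP2 h'; omega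
    · have := endpoints_edge_length_one hP3 h'; omega
  have hne : (↑a : V) ≠ ↑b := fun h => hab (Subtype.coe_injective h)
  have hnadj' : ¬ G.Adj ↑a ↑b := hnadj
  have hsep0 : IsSep G ↑a ↑b {(↑a : V), ↑b}ᶜ := by
    refine ⟨by simp, by simp, ?_⟩
    rintro ⟨p, hp⟩
    have claim : ∀ (x : V) (p : G.Walk x ↑b), x = ↑a →
        (∀ v ∈ p.support, v ∉ ({(↑a : V), ↑b}ᶜ : Set V)) → False := by
      intro x p
      cases p with
      | nil => intro hxa _; exact hne hxa.symm
      | cons h q =>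
        intro hxa hp
        subst hxa
        have hy := hp _ (by rw [Walk.support_cons]; exact List.mem_cons_of_mem _ q.start_mem_support)
        simp only [Set.mem_compl_iff, Set.mem_insert_iff, Set.mem_singleton_iff, not_not] at hy
        rcases hy with hy | hy
        · rw [hy] at h; exact G.loopless.irrefl _ h
        · rw [hy] at h; exact hnadj' h
    exact claim _ p rfl hp
  obtain ⟨T, hTsub, hTmin⟩ := exists_minSep hsep0
  have hTuc := hG T ⟨↑a, ↑b, hne, hnadj', hTmin⟩
  have hit : ∀ (P : (G.induce s).Walk a b),
      ∃ x : ↥s, x ∈ P.support ∧ ↑x ∈ T ∧ x ≠ a ∧ x ≠ b := by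
    intro P
    obtain ⟨v, hv, hvT, hva, hvb⟩ := sep_hits' hTmin.1 (P.map (homInduce G s))
    replace hv : v ∈ P.support.map (homInduce G s) := by rw [← Walk.support_map]; exact hv
    obtain ⟨x, hx, rfl⟩ := List.mem_map.mp hv
    exact ⟨x, hx, hvT, fun e => hva (by subst e; rfl), fun e => hvb (by subst e; rfl)⟩
  obtain ⟨x₁, m1, t1, a1, b1⟩ := hit P₁
  obtain ⟨x₂, m2, t2, a2, b2⟩ := hit P₂
  obtain ⟨x₃, m3, t3, a3, b3⟩ := hit P₃
  have ne12 : x₁ ≠ x₂ := fun e => by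
    rcases h12 x₁ m1 (e ▸ m2) with h | h
    · exact a1 (Subtype.coe_injective (congrArg _ h))
    · exact b1 (Subtype.coe_injective (congrArg _ h))
  have ne13 : x₁ ≠ x₃ := fun e => by
    rcases h13 x₁ m1 (e ▸ m3) with h | h
    · exact a1 (Subtype.coe_injective (congrArg _ h))
    · exact b1 (Subtype.coe_injective (congrArg _ h))
  have ne23 : x₂ ≠ x₃ := fun e => by
    rcases h23 x₂ m2 (e ▸ m3) with h | h
    · exact a2 (Subtype.coe_injective (congrArg _ h))
    · exact b2 (Subtype.coe_injective (congrArg _ h))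
  have resolve : ∀ (y z : ↥s), y ≠ a → y ≠ b → z ≠ a → z ≠ b →
      y ∈ P₁.support ∧ z ∈ P₂.support ∨ y ∈ P₁.support ∧ z ∈ P₃.support ∨
        y ∈ P₂.support ∧ z ∈ P₃.support → ¬ G.Adj ↑y ↑z := by
    rintro y z hya hyb hza hzb hcase h
    have h' : (G.induce s).Adj y z := h
    have hmem : ∀ (P : (G.induce s).Walk a b), s(y,z) ∈ P.edges →
        y ∈ P.support ∧ z ∈ P.support := fun P he =>
      ⟨P.fst_mem_support_of_mem_edges he, P.snd_mem_support_of_mem_edges he⟩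
    rcases hcase with ⟨hy1, hz2⟩ | ⟨hy1, hz3⟩ | ⟨hy2, hz3⟩ <;>
      rcases (hiff y z).mp h' with he | he | he
    · rcases h12 z (hmem P₁ he).2 hz2 with h | h
      · exact hza h
      · exact hzb h
    · rcases h12 y hy1 (hmem P₂ he).1 with h | h
      · exact hya h
      · exact hyb h
    · rcases h13 y hy1 (hmem P₃ he).1 with h | h
      · exact hya h
      · exact hyb h
    · rcases h13 z (hmem P₁ he).2 hz3 with h | h
      · exact hza h
      · exact hzb h
    · rcases h12 y hy1 (hmem P₂ he).1 with h | h
      · exact hya h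
      · exact hyb h
    · rcases h13 y hy1 (hmem P₃ he).1 with h | h
      · exact hya h
      · exact hyb h
    · rcases h13 z (hmem P₁ he).2 hz3 with h | h
      · exact hza h
      · exact hzb h
    · rcases h23 z (hmem P₂ he).2 hz3 with h | h
      · exact hza h
      · exact hzb h
    · rcases h23 y hy2 (hmem P₃ he).1 with h | h
      · exact hya h
      · exact hyb h
  exact two_cliques_pigeonhole hTuc t1 t2 t3
    (fun e => ne12 (Subtype.coe_injective e))
    (fun e => ne13 (Subtype.coe_injective e))
    (fun e => ne23 (Subtype.coe_injective e))
    (resolve x₁ x₂ a1 b1 a2 b2 (Or.inl ⟨m1, m2⟩))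
    (resolve x₁ x₃ a1 b1 a3 b3 (Or.inr (Or.inl ⟨m1, m3⟩)))
    (resolve x₂ x₃ a2 b2 a3 b3 (Or.inr (Or.inr ⟨m2, m3⟩)))


open SimpleGraph.Walk in
lemma pyramid_core [Finite V] {G : SimpleGraph V} (hG : MemGk 2 G) {s : Set V}
    {a b₁ b₂ b₃ : ↥s} {P₁ : (G.induce s).Walk a b₁} {P₂ : (G.induce s).Walk a b₂}
    {P₃ : (G.induce s).Walk a b₃}
    (e12 : (G.induce s).Adj b₁ b₂) (e13 : (G.induce s).Adj b₁ b₃)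
    (e23 : (G.induce s).Adj b₂ b₃)
    (hP1 : P₁.IsPath) (hP2 : P₂.IsPath) (hP3 : P₃.IsPath)
    (hl3 : 1 ≤ P₃.length) (hl1 : 2 ≤ P₁.length) (hl2 : 2 ≤ P₂.length)
    (h12 : ∀ v, v ∈ P₁.support → v ∈ P₂.support → v = a)
    (h13 : ∀ v, v ∈ P₁.support → v ∈ P₃.support → v = a)
    (h23 : ∀ v, v ∈ P₂.support → v ∈ P₃.support → v = a)
    (hiff : ∀ u v, (G.induce s).Adj u v ↔
      s(u, v) ∈ P₁.edges ∨ s(u, v) ∈ P₂.edges ∨ s(u, v) ∈ P₃.edges ∨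
      s(u, v) = s(b₁, b₂) ∨ s(u, v) = s(b₁, b₃) ∨ s(u, v) = s(b₂, b₃)) : False := by
  have hab1 : a ≠ b₁ := by rintro rfl; exact path_loop_false hP1 (by omega)
  have hab2 : a ≠ b₂ := by rintro rfl; exact path_loop_false hP2 (by omega)
  have hab3 : a ≠ b₃ := by rintro rfl; exact path_loop_false hP3 (by omega)
  have hb12 : b₁ ≠ b₂ := e12.ne
  have hb13 : b₁ ≠ b₃ := e13.ne
  have hb23 : b₂ ≠ b₃ := e23.ne
  have nb1P2 : b₁ ∉ P₂.support := fun h => hab1 (h12 b₁ P₁.end_mem_support h).symm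
  have nb1P3 : b₁ ∉ P₃.support := fun h => hab1 (h13 b₁ P₁.end_mem_support h).symm
  have nb2P1 : b₂ ∉ P₁.support := fun h => hab2 (h12 b₂ h P₂.end_mem_support).symm
  have nb2P3 : b₂ ∉ P₃.support := fun h => hab2 (h23 b₂ P₂.end_mem_support h).symm
  have nb3P1 : b₃ ∉ P₁.support := fun h => hab3 (h13 b₃ h P₃.end_mem_support).symm
  have nb3P2 : b₃ ∉ P₂.support := fun h => hab3 (h23 b₃ h P₃.end_mem_support).symm
  have na1 : ¬ (G.induce s).Adj a b₁ := by
    intro h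
    rcases (hiff a b₁).mp h with h' | h' | h' | h' | h' | h'
    · have := endpoints_edge_length_one hP1 h'; omega
    · exact nb1P2 (P₂.snd_mem_support_of_mem_edges h')
    · exact nb1P3 (P₃.snd_mem_support_of_mem_edges h')
    · rw [Sym2.eq_iff] at h'
      rcases h' with ⟨h1, -⟩ | ⟨h1, -⟩
      · exact hab1 h1
      · exact hab2 h1
    · rw [Sym2.eq_iff] at h'
      rcases h' with ⟨h1, -⟩ | ⟨h1, -⟩
      · exact hab1 h1
      · exact hab3 h1
    · rw [Sym2.eq_iff] at h'
      rcases h' with ⟨h1, -⟩ | ⟨h1, -⟩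
      · exact hab2 h1
      · exact hab3 h1
  have na2 : ¬ (G.induce s).Adj a b₂ := by
    intro h
    rcases (hiff a b₂).mp h with h' | h' | h' | h' | h' | h'
    · exact nb2P1 (P₁.snd_mem_support_of_mem_edges h')
    · have := endpoints_edge_length_one hP2 h'; omega
    · exact nb2P3 (P₃.snd_mem_support_of_mem_edges h')
    · rw [Sym2.eq_iff] at h'
      rcases h' with ⟨h1, -⟩ | ⟨h1, -⟩
      · exact hab1 h1
      · exact hab2 h1
    · rw [Sym2.eq_iff] at h'
      rcases h' with ⟨h1, -⟩ | ⟨h1, -⟩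
      · exact hab1 h1
      · exact hab3 h1
    · rw [Sym2.eq_iff] at h'
      rcases h' with ⟨h1, -⟩ | ⟨h1, -⟩
      · exact hab2 h1
      · exact hab3 h1
  have hne1 : (↑a : V) ≠ ↑b₁ := fun h => hab1 (Subtype.coe_injective h)
  have hna1 : ¬ G.Adj ↑a ↑b₁ := na1
  have hna2 : ¬ G.Adj ↑a ↑b₂ := na2
  have hsep0 : IsSep G ↑a ↑b₁ ({(↑a : V), ↑b₁, ↑b₂}ᶜ : Set V) := by
    refine ⟨by simp, by simp, ?_⟩
    rintro ⟨p, hp⟩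
    have claim : ∀ (x : V) (p : G.Walk x ↑b₁), x = ↑a →
        (∀ v ∈ p.support, v ∉ ({(↑a : V), ↑b₁, ↑b₂}ᶜ : Set V)) → False := by
      intro x p
      cases p with
      | nil => intro hxa _; exact hne1 hxa.symm
      | cons h q =>
        intro hxa hp
        subst hxa
        have hy := hp _ (by
          rw [Walk.support_cons]
          exact List.mem_cons_of_mem _ q.start_mem_support)
        simp only [Set.mem_compl_iff, Set.mem_insert_iff, Set.mem_singleton_iff, not_not] at hy
        rcases hy with hy | hy | hy
        · rw [hy] at h; exact G.loopless.irrefl _ h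
        · rw [hy] at h; exact hna1 h
        · rw [hy] at h; exact hna2 h
    exact claim _ p rfl hp
  obtain ⟨T, hTsub, hTmin⟩ := exists_minSep hsep0
  have hTuc := hG T ⟨↑a, ↑b₁, hne1, hna1, hTmin⟩
  have hit : ∀ (P : (G.induce s).Walk a b₁),
      ∃ x : ↥s, x ∈ P.support ∧ ↑x ∈ T ∧ x ≠ a ∧ x ≠ b₁ ∧ x ≠ b₂ := by
    intro P
    obtain ⟨v, hv, hvT, -, -⟩ := sep_hits' hTmin.1 (P.map (homInduce G s))
    replace hv : v ∈ P.support.map (homInduce G s) := by rw [← Walk.support_map]; exact hv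
    obtain ⟨x, hx, rfl⟩ := List.mem_map.mp hv
    have hS0 := hTsub hvT
    simp only [Set.mem_compl_iff, Set.mem_insert_iff, Set.mem_singleton_iff, not_or] at hS0
    exact ⟨x, hx, hvT, fun e => hS0.1 (by subst e; rfl), fun e => hS0.2.1 (by subst e; rfl),
      fun e => hS0.2.2 (by subst e; rfl)⟩
  obtain ⟨x₁, m1, t1, na1', nb1', nb2'⟩ := hit P₁
  obtain ⟨x₂, m2', t2, na2', nb1'', nb2''⟩ := hit (P₂.concat e12.symm)
  obtain ⟨x₃, m3', t3, na3', nb1''', nb2'''⟩ := hit (P₃.concat e13.symm)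
  have m2 : x₂ ∈ P₂.support := by
    rw [Walk.support_concat, List.mem_append] at m2'
    rcases m2' with h | h
    · exact h
    · simp only [List.mem_singleton] at h; exact absurd h nb1''
  have m3 : x₃ ∈ P₃.support := by
    rw [Walk.support_concat, List.mem_append] at m3'
    rcases m3' with h | h
    · exact h
    · simp only [List.mem_singleton] at h; exact absurd h nb1'''
  -- x₁ is not b₃
  have x1nb3 : x₁ ≠ b₃ := fun e => nb3P1 (e ▸ m1)
  have x2nb3 : x₂ ≠ b₃ := fun e => nb3P2 (e ▸ m2)
  -- distinctness
  have ne12 : x₁ ≠ x₂ := fun e => na1' (h12 x₁ m1 (e ▸ m2))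
  have ne13 : x₁ ≠ x₃ := fun e => na1' (h13 x₁ m1 (e ▸ m3))
  have ne23 : x₂ ≠ x₃ := fun e => na2' (h23 x₂ m2 (e ▸ m3))
  -- nonadjacency
  have nadj12 : ¬ (G.induce s).Adj x₁ x₂ := by
    intro h
    rcases (hiff x₁ x₂).mp h with h' | h' | h' | h' | h' | h'
    · exact na2' (h12 x₂ (P₁.snd_mem_support_of_mem_edges h') m2)
    · exact na1' (h12 x₁ m1 (P₂.fst_mem_support_of_mem_edges h'))
    · exact na1' (h13 x₁ m1 (P₃.fst_mem_support_of_mem_edges h'))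
    · rw [Sym2.eq_iff] at h'
      rcases h' with ⟨h1, -⟩ | ⟨h1, -⟩
      · exact nb1' h1
      · exact nb2' h1
    · rw [Sym2.eq_iff] at h'
      rcases h' with ⟨h1, -⟩ | ⟨h1, -⟩
      · exact nb1' h1
      · exact x1nb3 h1
    · rw [Sym2.eq_iff] at h'
      rcases h' with ⟨h1, -⟩ | ⟨h1, -⟩
      · exact nb2' h1
      · exact x1nb3 h1
  have nadj13 : ¬ (G.induce s).Adj x₁ x₃ := by
    intro h
    rcases (hiff x₁ x₃).mp h with h' | h' | h' | h' | h' | h'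
    · exact na3' (h13 x₃ (P₁.snd_mem_support_of_mem_edges h') m3)
    · exact na1' (h12 x₁ m1 (P₂.fst_mem_support_of_mem_edges h'))
    · exact na1' (h13 x₁ m1 (P₃.fst_mem_support_of_mem_edges h'))
    · rw [Sym2.eq_iff] at h'
      rcases h' with ⟨h1, -⟩ | ⟨h1, -⟩
      · exact nb1' h1
      · exact nb2' h1
    · rw [Sym2.eq_iff] at h'
      rcases h' with ⟨h1, -⟩ | ⟨h1, -⟩
      · exact nb1' h1
      · exact x1nb3 h1
    · rw [Sym2.eq_iff] at h'
      rcases h' with ⟨h1, -⟩ | ⟨h1, -⟩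
      · exact nb2' h1
      · exact x1nb3 h1
  have nadj23 : ¬ (G.induce s).Adj x₂ x₃ := by
    intro h
    rcases (hiff x₂ x₃).mp h with h' | h' | h' | h' | h' | h'
    · exact na2' (h12 x₂ (P₁.fst_mem_support_of_mem_edges h') m2)
    · exact na3' (h23 x₃ (P₂.snd_mem_support_of_mem_edges h') m3)
    · exact na2' (h23 x₂ m2 (P₃.fst_mem_support_of_mem_edges h'))
    · rw [Sym2.eq_iff] at h'
      rcases h' with ⟨h1, -⟩ | ⟨h1, -⟩
      · exact nb1P2 (h1 ▸ m2)
      · exact nb2'' h1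
    · rw [Sym2.eq_iff] at h'
      rcases h' with ⟨h1, -⟩ | ⟨h1, -⟩
      · exact nb1P2 (h1 ▸ m2)
      · exact x2nb3 h1
    · rw [Sym2.eq_iff] at h'
      rcases h' with ⟨h1, -⟩ | ⟨h1, -⟩
      · exact nb2'' h1
      · exact x2nb3 h1
  exact two_cliques_pigeonhole hTuc t1 t2 t3
    (fun e => ne12 (Subtype.coe_injective e))
    (fun e => ne13 (Subtype.coe_injective e))
    (fun e => ne23 (Subtype.coe_injective e))
    nadj12 nadj13 nadj23

lemma no_pyramid [Finite V] {G : SimpleGraph V} (hG : MemGk 2 G) (s : Set V) :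
    ¬ IsPyramid (G.induce s) := by
  rintro ⟨a, b₁, b₂, b₃, P₁, P₂, P₃, e12, e13, e23, hP1, hP2, hP3, hl1, hl2, hl3,
    hdisj, h12, h13, h23, -, hiff⟩
  rcases hdisj with ⟨g1, g2⟩ | ⟨g1, g2⟩ | ⟨g1, g2⟩
  · exact pyramid_core hG e12 e13 e23 hP1 hP2 hP3 hl3 g1 g2 h12 h13 h23 hiff
  · exact pyramid_core hG e13 e12 e23.symm hP1 hP3 hP2 hl2 g1 g2 h13 h12
      (fun v h3 h2 => h23 v h2 h3)
      (fun u v => by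
        rw [hiff u v, show (s(b₂,b₃) : Sym2 ↥s) = s(b₃,b₂) from Sym2.eq_swap]
        tauto)
  · exact pyramid_core hG e23 e12.symm e13.symm hP2 hP3 hP1 hl1 g1 g2 h23
      (fun v h2 h1 => h12 v h1 h2) (fun v h3 h1 => h13 v h1 h3)
      (fun u v => by
        rw [hiff u v, show (s(b₁,b₂) : Sym2 ↥s) = s(b₂,b₁) from Sym2.eq_swap,
          show (s(b₁,b₃) : Sym2 ↥s) = s(b₃,b₁) from Sym2.eq_swap]
        tauto)


open SimpleGraph.Walk in
lemma prism_core [Finite V] {G : SimpleGraph V} (hG : MemGk 2 G) {s : Set V}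
    {a₁ a₂ a₃ b₁ b₂ b₃ : ↥s} {P₁ : (G.induce s).Walk a₁ b₁} {P₂ : (G.induce s).Walk a₂ b₂}
    {P₃ : (G.induce s).Walk a₃ b₃}
    (ea12 : (G.induce s).Adj a₁ a₂) (ea13 : (G.induce s).Adj a₁ a₃)
    (ea23 : (G.induce s).Adj a₂ a₃)
    (eb12 : (G.induce s).Adj b₁ b₂) (eb13 : (G.induce s).Adj b₁ b₃)
    (eb23 : (G.induce s).Adj b₂ b₃)
    (hP1 : P₁.IsPath) (hP2 : P₂.IsPath) (hP3 : P₃.IsPath)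
    (hl2 : 1 ≤ P₂.length) (hl3 : 1 ≤ P₃.length) (hl1 : 2 ≤ P₁.length)
    (d12 : ∀ v, v ∈ P₁.support → v ∈ P₂.support → False)
    (d13 : ∀ v, v ∈ P₁.support → v ∈ P₃.support → False)
    (d23 : ∀ v, v ∈ P₂.support → v ∈ P₃.support → False)
    (hiff : ∀ u v, (G.induce s).Adj u v ↔
      s(u, v) ∈ P₁.edges ∨ s(u, v) ∈ P₂.edges ∨ s(u, v) ∈ P₃.edges ∨
      s(u, v) = s(a₁, a₂) ∨ s(u, v) = s(a₁, a₃) ∨ s(u, v) = s(a₂, a₃) ∨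
      s(u, v) = s(b₁, b₂) ∨ s(u, v) = s(b₁, b₃) ∨ s(u, v) = s(b₂, b₃)) : False := by
  have sa1 : a₁ ∈ P₁.support := P₁.start_mem_support
  have sa2 : a₂ ∈ P₂.support := P₂.start_mem_support
  have sa3 : a₃ ∈ P₃.support := P₃.start_mem_support
  have sb1 : b₁ ∈ P₁.support := P₁.end_mem_support
  have sb2 : b₂ ∈ P₂.support := P₂.end_mem_support
  have sb3 : b₃ ∈ P₃.support := P₃.end_mem_support
  have nab1 : a₁ ≠ b₁ := by rintro rfl; exact path_loop_false hP1 (by omega)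
  have nab2 : a₂ ≠ b₂ := by rintro rfl; exact path_loop_false hP2 hl2
  have nab3 : a₃ ≠ b₃ := by rintro rfl; exact path_loop_false hP3 hl3
  -- cross adjacency characterizations
  have cross12 : ∀ x y : ↥s, x ∈ P₁.support → y ∈ P₂.support → (G.induce s).Adj x y →
      (x = a₁ ∧ y = a₂) ∨ (x = b₁ ∧ y = b₂) := by
    intro x y hx hy h
    rcases (hiff x y).mp h with h' | h' | h' | h' | h' | h' | h' | h' | h'
    · exact absurd (P₁.snd_mem_support_of_mem_edges h') (fun hc => d12 y hc hy)
    · exact absurd (P₂.fst_mem_support_of_mem_edges h') (fun hc => d12 x hx hc)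
    · exact absurd (P₃.fst_mem_support_of_mem_edges h') (fun hc => d13 x hx hc)
    · rw [Sym2.eq_iff] at h'
      rcases h' with ⟨h1, h2⟩ | ⟨h1, h2⟩
      · exact Or.inl ⟨h1, h2⟩
      · exact absurd hx (fun hc => d12 x hc (by rw [h1]; exact sa2))
    · rw [Sym2.eq_iff] at h'
      rcases h' with ⟨h1, h2⟩ | ⟨h1, h2⟩
      · exact absurd hy (fun hc => d23 y hc (by rw [h2]; exact sa3))
      · exact absurd hx (fun hc => d13 x hc (by rw [h1]; exact sa3))
    · rw [Sym2.eq_iff] at h'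
      rcases h' with ⟨h1, h2⟩ | ⟨h1, h2⟩
      · exact absurd hx (fun hc => d12 x hc (by rw [h1]; exact sa2))
      · exact absurd hx (fun hc => d13 x hc (by rw [h1]; exact sa3))
    · rw [Sym2.eq_iff] at h'
      rcases h' with ⟨h1, h2⟩ | ⟨h1, h2⟩
      · exact Or.inr ⟨h1, h2⟩
      · exact absurd hx (fun hc => d12 x hc (by rw [h1]; exact sb2))
    · rw [Sym2.eq_iff] at h'
      rcases h' with ⟨h1, h2⟩ | ⟨h1, h2⟩
      · exact absurd hy (fun hc => d23 y hc (by rw [h2]; exact sb3))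
      · exact absurd hx (fun hc => d13 x hc (by rw [h1]; exact sb3))
    · rw [Sym2.eq_iff] at h'
      rcases h' with ⟨h1, h2⟩ | ⟨h1, h2⟩
      · exact absurd hx (fun hc => d12 x hc (by rw [h1]; exact sb2))
      · exact absurd hx (fun hc => d13 x hc (by rw [h1]; exact sb3))
  have cross13 : ∀ x y : ↥s, x ∈ P₁.support → y ∈ P₃.support → (G.induce s).Adj x y →
      (x = a₁ ∧ y = a₃) ∨ (x = b₁ ∧ y = b₃) := by
    intro x y hx hy h
    rcases (hiff x y).mp h with h' | h' | h' | h' | h' | h' | h' | h' | h'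
    · exact absurd (P₁.snd_mem_support_of_mem_edges h') (fun hc => d13 y hc hy)
    · exact absurd (P₂.fst_mem_support_of_mem_edges h') (fun hc => d12 x hx hc)
    · exact absurd (P₃.fst_mem_support_of_mem_edges h') (fun hc => d13 x hx hc)
    · rw [Sym2.eq_iff] at h'
      rcases h' with ⟨h1, h2⟩ | ⟨h1, h2⟩
      · exact absurd hy (fun hc => d23 y (by rw [h2]; exact sa2) hc)
      · exact absurd hx (fun hc => d12 x hc (by rw [h1]; exact sa2))
    · rw [Sym2.eq_iff] at h'
      rcases h' with ⟨h1, h2⟩ | ⟨h1, h2⟩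
      · exact Or.inl ⟨h1, h2⟩
      · exact absurd hx (fun hc => d13 x hc (by rw [h1]; exact sa3))
    · rw [Sym2.eq_iff] at h'
      rcases h' with ⟨h1, h2⟩ | ⟨h1, h2⟩
      · exact absurd hx (fun hc => d12 x hc (by rw [h1]; exact sa2))
      · exact absurd hx (fun hc => d13 x hc (by rw [h1]; exact sa3))
    · rw [Sym2.eq_iff] at h'
      rcases h' with ⟨h1, h2⟩ | ⟨h1, h2⟩
      · exact absurd hy (fun hc => d23 y (by rw [h2]; exact sb2) hc)
      · exact absurd hx (fun hc => d12 x hc (by rw [h1]; exact sb2))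
    · rw [Sym2.eq_iff] at h'
      rcases h' with ⟨h1, h2⟩ | ⟨h1, h2⟩
      · exact Or.inr ⟨h1, h2⟩
      · exact absurd hx (fun hc => d13 x hc (by rw [h1]; exact sb3))
    · rw [Sym2.eq_iff] at h'
      rcases h' with ⟨h1, h2⟩ | ⟨h1, h2⟩
      · exact absurd hx (fun hc => d12 x hc (by rw [h1]; exact sb2))
      · exact absurd hx (fun hc => d13 x hc (by rw [h1]; exact sb3))
  have cross23 : ∀ x y : ↥s, x ∈ P₂.support → y ∈ P₃.support → (G.induce s).Adj x y →
      (x = a₂ ∧ y = a₃) ∨ (x = b₂ ∧ y = b₃) := by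
    intro x y hx hy h
    rcases (hiff x y).mp h with h' | h' | h' | h' | h' | h' | h' | h' | h'
    · exact absurd (P₁.fst_mem_support_of_mem_edges h') (fun hc => d12 x hc hx)
    · exact absurd (P₂.snd_mem_support_of_mem_edges h') (fun hc => d23 y hc hy)
    · exact absurd (P₃.fst_mem_support_of_mem_edges h') (fun hc => d23 x hx hc)
    · rw [Sym2.eq_iff] at h'
      rcases h' with ⟨h1, h2⟩ | ⟨h1, h2⟩
      · exact absurd hx (fun hc => d12 x (by rw [h1]; exact sa1) hc)
      · exact absurd hy (fun hc => d13 y (by rw [h2]; exact sa1) hc)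
    · rw [Sym2.eq_iff] at h'
      rcases h' with ⟨h1, h2⟩ | ⟨h1, h2⟩
      · exact absurd hx (fun hc => d12 x (by rw [h1]; exact sa1) hc)
      · exact absurd hx (fun hc => d23 x hc (by rw [h1]; exact sa3))
    · rw [Sym2.eq_iff] at h'
      rcases h' with ⟨h1, h2⟩ | ⟨h1, h2⟩
      · exact Or.inl ⟨h1, h2⟩
      · exact absurd hx (fun hc => d23 x hc (by rw [h1]; exact sa3))
    · rw [Sym2.eq_iff] at h'
      rcases h' with ⟨h1, h2⟩ | ⟨h1, h2⟩
      · exact absurd hx (fun hc => d12 x (by rw [h1]; exact sb1) hc)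
      · exact absurd hy (fun hc => d13 y (by rw [h2]; exact sb1) hc)
    · rw [Sym2.eq_iff] at h'
      rcases h' with ⟨h1, h2⟩ | ⟨h1, h2⟩
      · exact absurd hx (fun hc => d12 x (by rw [h1]; exact sb1) hc)
      · exact absurd hx (fun hc => d23 x hc (by rw [h1]; exact sb3))
    · rw [Sym2.eq_iff] at h'
      rcases h' with ⟨h1, h2⟩ | ⟨h1, h2⟩
      · exact Or.inr ⟨h1, h2⟩
      · exact absurd hx (fun hc => d23 x hc (by rw [h1]; exact sb3))
  -- within-P₁ adjacency is a P₁-edge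
  have within1 : ∀ x y : ↥s, x ∈ P₁.support → y ∈ P₁.support → (G.induce s).Adj x y →
      s(x, y) ∈ P₁.edges := by
    intro x y hx hy h
    rcases (hiff x y).mp h with h' | h' | h' | h' | h' | h' | h' | h' | h'
    · exact h'
    · exact absurd (P₂.fst_mem_support_of_mem_edges h') (fun hc => d12 x hx hc)
    · exact absurd (P₃.fst_mem_support_of_mem_edges h') (fun hc => d13 x hx hc)
    · rw [Sym2.eq_iff] at h'
      rcases h' with ⟨h1, h2⟩ | ⟨h1, h2⟩
      · exact absurd hy (fun hc => d12 y hc (by rw [h2]; exact sa2))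
      · exact absurd hx (fun hc => d12 x hc (by rw [h1]; exact sa2))
    · rw [Sym2.eq_iff] at h'
      rcases h' with ⟨h1, h2⟩ | ⟨h1, h2⟩
      · exact absurd hy (fun hc => d13 y hc (by rw [h2]; exact sa3))
      · exact absurd hx (fun hc => d13 x hc (by rw [h1]; exact sa3))
    · rw [Sym2.eq_iff] at h'
      rcases h' with ⟨h1, h2⟩ | ⟨h1, h2⟩
      · exact absurd hx (fun hc => d12 x hc (by rw [h1]; exact sa2))
      · exact absurd hx (fun hc => d13 x hc (by rw [h1]; exact sa3))
    · rw [Sym2.eq_iff] at h'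
      rcases h' with ⟨h1, h2⟩ | ⟨h1, h2⟩
      · exact absurd hy (fun hc => d12 y hc (by rw [h2]; exact sb2))
      · exact absurd hx (fun hc => d12 x hc (by rw [h1]; exact sb2))
    · rw [Sym2.eq_iff] at h'
      rcases h' with ⟨h1, h2⟩ | ⟨h1, h2⟩
      · exact absurd hy (fun hc => d13 y hc (by rw [h2]; exact sb3))
      · exact absurd hx (fun hc => d13 x hc (by rw [h1]; exact sb3))
    · rw [Sym2.eq_iff] at h'
      rcases h' with ⟨h1, h2⟩ | ⟨h1, h2⟩
      · exact absurd hx (fun hc => d12 x hc (by rw [h1]; exact sb2))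
      · exact absurd hx (fun hc => d13 x hc (by rw [h1]; exact sb3))
  -- four nonadjacencies
  have na11 : ¬ (G.induce s).Adj a₁ b₁ := by
    intro h
    have := endpoints_edge_length_one hP1 (within1 a₁ b₁ sa1 sb1 h)
    omega
  have na12 : ¬ (G.induce s).Adj a₁ b₂ := by
    intro h
    rcases cross12 a₁ b₂ sa1 sb2 h with ⟨-, h2⟩ | ⟨h1, -⟩
    · exact nab2 h2.symm
    · exact nab1 h1
  have na31 : ¬ (G.induce s).Adj a₃ b₁ := by
    intro h
    rcases cross13 b₁ a₃ sb1 sa3 h.symm with ⟨h1, -⟩ | ⟨-, h2⟩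
    · exact nab1 h1.symm
    · exact nab3 h2
  have na32 : ¬ (G.induce s).Adj a₃ b₂ := by
    intro h
    rcases cross23 b₂ a₃ sb2 sa3 h.symm with ⟨h1, -⟩ | ⟨-, h2⟩
    · exact nab2 h1.symm
    · exact nab3 h2
  -- distinctness for separator pair
  have hne12 : (↑a₁ : V) ≠ ↑b₂ := fun h =>
    d12 a₁ sa1 (by rw [show a₁ = b₂ from Subtype.coe_injective h]; exact sb2)
  have hne32 : (↑a₃ : V) ≠ ↑b₂ := fun h =>
    d23 a₃ (by rw [show a₃ = b₂ from Subtype.coe_injective h]; exact sb2) sa3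
  have hna11 : ¬ G.Adj ↑a₁ ↑b₁ := na11
  have hna12 : ¬ G.Adj ↑a₁ ↑b₂ := na12
  have hna31 : ¬ G.Adj ↑a₃ ↑b₁ := na31
  have hna32 : ¬ G.Adj ↑a₃ ↑b₂ := na32
  -- the separator
  have hsep0 : IsSep G ↑a₁ ↑b₂ ({(↑a₁ : V), ↑a₃, ↑b₁, ↑b₂}ᶜ : Set V) := by
    refine ⟨by simp, by simp, ?_⟩
    rintro ⟨p, hp⟩
    have claim : ∀ (x z : V) (Q : G.Walk x z), z = ↑b₂ →
        (∀ v ∈ Q.support, v ∉ ({(↑a₁ : V), ↑a₃, ↑b₁, ↑b₂}ᶜ : Set V)) →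
        (x = ↑a₁ ∨ x = ↑a₃) → False := by
      intro x z Q
      induction Q with
      | nil =>
        intro hz _ hx
        subst hz
        rcases hx with h | h
        · exact hne12 h.symm
        · exact hne32 h.symm
      | @cons u y z' hadj q ih =>
        intro hz hsupp hx
        subst hz
        have hyK : y ∈ ({(↑a₁ : V), ↑a₃, ↑b₁, ↑b₂} : Set V) := by
          have h' := hsupp y (by
            rw [Walk.support_cons]
            exact List.mem_cons_of_mem _ q.start_mem_support)
          rwa [Set.notMem_compl_iff] at h'
        have hsupp' : ∀ v ∈ q.support, v ∉ ({(↑a₁ : V), ↑a₃, ↑b₁, ↑b₂}ᶜ : Set V) := fun v hv =>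
          hsupp v (by rw [Walk.support_cons]; exact List.mem_cons_of_mem _ hv)
        simp only [Set.mem_insert_iff, Set.mem_singleton_iff] at hyK
        rcases hx with rfl | rfl <;> rcases hyK with rfl | rfl | rfl | rfl
        · exact G.loopless.irrefl _ hadj
        · exact ih rfl hsupp' (Or.inr rfl)
        · exact hna11 hadj
        · exact hna12 hadj
        · exact ih rfl hsupp' (Or.inl rfl)
        · exact G.loopless.irrefl _ hadj
        · exact hna31 hadj
        · exact hna32 hadj
    exact claim _ _ p rfl hp (Or.inl rfl)
  obtain ⟨T, hTsub, hTmin⟩ := exists_minSep hsep0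
  have hTuc := hG T ⟨↑a₁, ↑b₂, hne12, hna12, hTmin⟩
  have hit : ∀ (P : (G.induce s).Walk a₁ b₂),
      ∃ x : ↥s, x ∈ P.support ∧ ↑x ∈ T ∧ x ≠ a₁ ∧ x ≠ a₃ ∧ x ≠ b₁ ∧ x ≠ b₂ := by
    intro P
    obtain ⟨v, hv, hvT, -, -⟩ := sep_hits' hTmin.1 (P.map (homInduce G s))
    replace hv : v ∈ P.support.map (homInduce G s) := by rw [← Walk.support_map]; exact hv
    obtain ⟨x, hx, rfl⟩ := List.mem_map.mp hv
    have hS0 := hTsub hvT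
    simp only [Set.mem_compl_iff, Set.mem_insert_iff, Set.mem_singleton_iff, not_or] at hS0
    exact ⟨x, hx, hvT, fun e => hS0.1 (by subst e; rfl), fun e => hS0.2.1 (by subst e; rfl),
      fun e => hS0.2.2.1 (by subst e; rfl), fun e => hS0.2.2.2 (by subst e; rfl)⟩
  -- three walks from a₁ to b₂
  obtain ⟨x₁, m1', t1, q1a1, q1a3, q1b1, q1b2⟩ := hit (P₁.concat eb12)
  obtain ⟨x₂, m2', t2, q2a1, q2a3, q2b1, q2b2⟩ := hit (Walk.cons ea12 P₂)
  obtain ⟨x₃, m3', t3, q3a1, q3a3, q3b1, q3b2⟩ := hit (Walk.cons ea13 (P₃.concat eb23.symm))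
  have m1 : x₁ ∈ P₁.support := by
    rw [Walk.support_concat, List.mem_append] at m1'
    rcases m1' with h | h
    · exact h
    · simp only [List.mem_singleton] at h; exact absurd h q1b2
  have m2 : x₂ ∈ P₂.support := by
    rw [Walk.support_cons, List.mem_cons] at m2'
    rcases m2' with h | h
    · exact absurd h q2a1
    · exact h
  have m3 : x₃ ∈ P₃.support := by
    rw [Walk.support_cons, List.mem_cons] at m3'
    rcases m3' with h | h
    · exact absurd h q3a1
    · rw [Walk.support_concat, List.mem_append] at h
      rcases h with h | h
      · exact h
      · simp only [List.mem_singleton] at h; exact absurd h q3b2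
  -- distinctness
  have ne12' : x₁ ≠ x₂ := fun e => d12 x₁ m1 (e ▸ m2)
  have ne13' : x₁ ≠ x₃ := fun e => d13 x₁ m1 (e ▸ m3)
  have ne23' : x₂ ≠ x₃ := fun e => d23 x₂ m2 (e ▸ m3)
  -- nonadjacency
  have nadj12 : ¬ (G.induce s).Adj x₁ x₂ := by
    intro h
    rcases cross12 x₁ x₂ m1 m2 h with ⟨h1, -⟩ | ⟨h1, -⟩
    · exact q1a1 h1
    · exact q1b1 h1
  have nadj13 : ¬ (G.induce s).Adj x₁ x₃ := by
    intro h
    rcases cross13 x₁ x₃ m1 m3 h with ⟨h1, -⟩ | ⟨h1, -⟩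
    · exact q1a1 h1
    · exact q1b1 h1
  have nadj23 : ¬ (G.induce s).Adj x₂ x₃ := by
    intro h
    rcases cross23 x₂ x₃ m2 m3 h with ⟨-, h2⟩ | ⟨h1, -⟩
    · exact q3a3 h2
    · exact q2b2 h1
  exact two_cliques_pigeonhole hTuc t1 t2 t3
    (fun e => ne12' (Subtype.coe_injective e))
    (fun e => ne13' (Subtype.coe_injective e))
    (fun e => ne23' (Subtype.coe_injective e))
    nadj12 nadj13 nadj23

set_option maxHeartbeats 1000000 in
lemma no_long_prism [Finite V] {G : SimpleGraph V} (hG : MemGk 2 G) (s : Set V) :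
    ¬ IsLongPrism (G.induce s) := by
  rintro ⟨a₁, a₂, a₃, b₁, b₂, b₃, P₁, P₂, P₃, ea12, ea13, ea23, eb12, eb13, eb23,
    hP1, hP2, hP3, hl1, hl2, hl3, hdisj, d12, d13, d23, -, hiff⟩
  rcases hdisj with g | g | g
  · exact prism_core hG ea12 ea13 ea23 eb12 eb13 eb23 hP1 hP2 hP3 hl2 hl3 g d12 d13 d23 hiff
  · exact prism_core hG ea12.symm ea23 ea13 eb12.symm eb23 eb13 hP2 hP1 hP3
      hl1 hl3 g (fun v h2 h1 => d12 v h1 h2) d23 d13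
      (fun u v => by
        rw [hiff u v, show (s(a₁,a₂) : Sym2 ↥s) = s(a₂,a₁) from Sym2.eq_swap,
          show (s(b₁,b₂) : Sym2 ↥s) = s(b₂,b₁) from Sym2.eq_swap]
        tauto)
  · exact prism_core hG ea13.symm ea23.symm ea12 eb13.symm eb23.symm eb12 hP3 hP1 hP2
      hl1 hl2 g (fun v h3 h1 => d13 v h1 h3) (fun v h3 h2 => d23 v h2 h3) d12
      (fun u v => by
        rw [hiff u v, show (s(a₁,a₃) : Sym2 ↥s) = s(a₃,a₁) from Sym2.eq_swap,
          show (s(b₁,b₃) : Sym2 ↥s) = s(b₃,b₁) from Sym2.eq_swap,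
          show (s(a₂,a₃) : Sym2 ↥s) = s(a₃,a₂) from Sym2.eq_swap,
          show (s(b₂,b₃) : Sym2 ↥s) = s(b₃,b₂) from Sym2.eq_swap]
        tauto)


open SimpleGraph.Walk in
set_option maxHeartbeats 1000000 in
lemma no_wheel [Finite V] {G : SimpleGraph V} (hdf : DiamondFree G) (hG : MemGk 2 G)
    (s : Set V) : ¬ IsWheel (G.induce s) := by
  classical
  rintro ⟨v, x, c, hc, hlen, hv, -, hchord, hcard⟩
  -- three distinct neighbours of v on the hole
  obtain ⟨t, hts, htcard⟩ :=
    Set.exists_subset_card_eq (s := {u : ↥s | u ∈ c.support ∧ (G.induce s).Adj v u}) (n := 3) hcard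
  obtain ⟨t₁, t₂, t₃, h12, h13, h23, rfl⟩ := Set.ncard_eq_three.mp htcard
  have ht1 := hts (by simp : t₁ ∈ ({t₁, t₂, t₃} : Set ↥s))
  have ht2 := hts (by simp : t₂ ∈ ({t₁, t₂, t₃} : Set ↥s))
  have ht3 := hts (by simp : t₃ ∈ ({t₁, t₂, t₃} : Set ↥s))
  -- a nonadjacent pair among them
  obtain ⟨u, w, hu, hw, huw, hnadj⟩ :
      ∃ u w : ↥s, (u ∈ c.support ∧ (G.induce s).Adj v u) ∧
        (w ∈ c.support ∧ (G.induce s).Adj v w) ∧ u ≠ w ∧ ¬ (G.induce s).Adj u w := by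
    by_cases hA : (G.induce s).Adj t₁ t₂
    · by_cases hB : (G.induce s).Adj t₁ t₃
      · by_cases hC : (G.induce s).Adj t₂ t₃
        · exact absurd (no_triangle_in_cycle hc hlen h12 h13 h23
            (hchord t₁ t₂ ht1.1 ht2.1 hA) (hchord t₁ t₃ ht1.1 ht3.1 hB)
            (hchord t₂ t₃ ht2.1 ht3.1 hC)) not_false
        · exact ⟨t₂, t₃, ht2, ht3, h23, hC⟩
      · exact ⟨t₁, t₃, ht1, ht3, h13, hB⟩
    · exact ⟨t₁, t₂, ht1, ht2, h12, hA⟩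
  obtain ⟨hu_mem, hvu⟩ := hu
  obtain ⟨hw_mem, hvw⟩ := hw
  have hne : (↑u : V) ≠ ↑w := fun h => huw (Subtype.coe_injective h)
  have hnadjG : ¬ G.Adj ↑u ↑w := hnadj
  -- the kept set
  set K : Set V := {p | p = ↑u ∨ p = ↑w ∨
    ∃ y : ↥s, y ∈ c.support ∧ (G.induce s).Adj v y ∧ p = ↑y} with hK
  have huK : (↑u : V) ∈ K := Or.inl rfl
  have hwK : (↑w : V) ∈ K := Or.inr (Or.inl rfl)
  have hsep0 : IsSep G ↑u ↑w Kᶜ := by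
    refine ⟨by simpa using huK, by simpa using hwK, ?_⟩
    rintro ⟨p, hp⟩
    have claim : ∀ (p₀ q₀ : V) (Q : G.Walk p₀ q₀), q₀ = ↑w →
        (∀ a ∈ Q.support, a ∉ Kᶜ) →
        (p₀ = ↑u ∨ ∃ z : ↥s, z ∈ c.support ∧ (G.induce s).Adj v z ∧
          (G.induce s).Adj u z ∧ p₀ = ↑z) → False := by
      intro p₀ q₀ Q
      induction Q with
      | nil =>
        intro hq _ hst
        subst hq
        rcases hst with h | ⟨z, -, -, hz1, hz2⟩
        · exact hne h.symm
        · exact hnadj (by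
            have : w = z := Subtype.coe_injective hz2
            rw [this]; exact hz1)
      | @cons p₀ y q₀ hadj Q ih =>
        intro hq hsupp hst
        subst hq
        have hyK : y ∈ K := by
          have h' := hsupp y (by
            rw [Walk.support_cons]
            exact List.mem_cons_of_mem _ Q.start_mem_support)
          rwa [Set.notMem_compl_iff] at h'
        have hsupp' : ∀ a ∈ Q.support, a ∉ Kᶜ := fun a ha =>
          hsupp a (by rw [Walk.support_cons]; exact List.mem_cons_of_mem _ ha)
        by_cases hyu : y = ↑u
        · subst hyu
          exact ih rfl hsupp' (Or.inl rfl)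
        by_cases hyw : y = ↑w
        · -- reached w : contradiction using the state
          subst hyw
          rcases hst with rfl | ⟨z, hz_mem, hvz, huz, rfl⟩
          · exact hnadjG hadj
          · -- diamond on v z u w
            exact hdf ⟨↑v, ↑z, ↑u, ↑w, hne, hvz, hvu, hvw, huz.symm, hadj, hnadjG⟩
        · -- y is a hole neighbour of v, distinct from u and w
          rcases hyK with h | h | ⟨z', hz'_mem, hvz', rfl⟩
          · exact hyu h
          · exact hyw h
          rcases hst with rfl | ⟨z, hz_mem, hvz, huz, rfl⟩
          · -- from u step to z'
            exact ih rfl hsupp' (Or.inr ⟨z', hz'_mem, hvz', hadj, rfl⟩)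
          · -- from z step to z'
            have hzz' : (G.induce s).Adj z z' := hadj
            have hne_uz' : u ≠ z' := fun e => hyu (congrArg Subtype.val e.symm)
            by_cases huz' : (G.induce s).Adj u z'
            · -- triangle u z z' on the hole
              exact no_triangle_in_cycle hc hlen huz.ne hne_uz' hzz'.ne
                (hchord u z hu_mem hz_mem huz) (hchord u z' hu_mem hz'_mem huz')
                (hchord z z' hz_mem hz'_mem hzz')
            · -- diamond v z u z'
              exact hdf ⟨↑v, ↑z, ↑u, ↑z', fun h => hne_uz' (Subtype.coe_injective h),
                hvz, hvu, hvz', huz.symm, hzz', huz'⟩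
    exact claim _ _ p rfl hp (Or.inl rfl)
  obtain ⟨T, hTsub, hTmin⟩ := exists_minSep hsep0
  have hTuc := hG T ⟨↑u, ↑w, hne, hnadjG, hTmin⟩
  -- v is in T
  have hvT : (↑v : V) ∈ T := by
    obtain ⟨z, hz, hzT, hzu, hzw⟩ := sep_hits' hTmin.1
      (Walk.cons (show G.Adj ↑u ↑v from hvu.symm)
        (Walk.cons (show G.Adj ↑v ↑w from hvw) Walk.nil))
    simp only [Walk.support_cons, Walk.support_nil, List.mem_cons,
      List.mem_singleton, List.not_mem_nil, or_false] at hz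
    rcases hz with rfl | rfl | rfl
    · exact absurd rfl hzu
    · exact hzT
    · exact absurd rfl hzw
  -- decompose the hole into two arcs between u and w
  have hw'_mem : w ∈ (c.rotate u hu_mem).support := by
    have h1 : w ∈ ((c.takeUntil u hu_mem).append (c.dropUntil u hu_mem)).support := by
      rw [c.take_spec hu_mem]; exact hw_mem
    rw [Walk.mem_support_append_iff] at h1
    show w ∈ ((c.dropUntil u hu_mem).append (c.takeUntil u hu_mem)).support
    rw [Walk.mem_support_append_iff]
    exact h1.symm
  have hc'cyc : (c.rotate u hu_mem).IsCycle := hc.rotate hu_mem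
  have hmemc' : ∀ y : ↥s, y ∈ (c.rotate u hu_mem).support → y ∈ c.support := by
    intro y hy
    have h1 : y ∈ ((c.dropUntil u hu_mem).append (c.takeUntil u hu_mem)).support := hy
    rw [Walk.mem_support_append_iff] at h1
    rcases h1 with h1 | h1
    · exact c.support_dropUntil_subset hu_mem h1
    · exact c.support_takeUntil_subset hu_mem h1
  set c' := c.rotate u hu_mem with hc'def
  set A1 := c'.takeUntil w hw'_mem with hA1def
  set A2 := c'.dropUntil w hw'_mem with hA2def
  have happ : A1.append A2 = c' := c'.take_spec hw'_mem
  have hnd : c'.support.tail.Nodup := by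
    rw [Walk.isCycle_def] at hc'cyc; exact hc'cyc.2.2
  have hsplit : c'.support = A1.support ++ A2.support.tail := by
    rw [← happ, Walk.support_append]
  have hA1cons : A1.support = u :: A1.support.tail := A1.support_eq_cons
  have htail : c'.support.tail = A1.support.tail ++ A2.support.tail := by
    have h1 := congrArg List.tail hsplit
    rwa [hA1cons, List.cons_append, List.tail_cons] at h1
  have hdisj : A1.support.tail.Disjoint A2.support.tail :=
    List.disjoint_of_nodup_append (htail ▸ hnd)
  have inter : ∀ y : ↥s, y ∈ A1.support → y ∈ A2.support → y = u ∨ y = w := by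
    intro y h1 h2
    rw [hA1cons, List.mem_cons] at h1
    rcases h1 with h1 | h1
    · exact Or.inl h1
    rw [A2.support_eq_cons, List.mem_cons] at h2
    rcases h2 with h2 | h2
    · exact Or.inr h2
    · exact absurd h2 (hdisj h1)
  have hedges : ∀ e, e ∈ c.edges → e ∈ A1.edges ∨ e ∈ A2.edges := by
    intro e he
    have h1 : e ∈ c'.edges := ((Walk.rotate_edges c u hu_mem).mem_iff).mpr he
    rw [← happ, Walk.edges_append] at h1
    exact List.mem_append.mp h1
  -- hits on the two arcs
  have hit1 : ∃ y : ↥s, y ∈ A1.support ∧ ↑y ∈ T ∧ y ≠ u ∧ y ≠ w := by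
    obtain ⟨z, hz, hzT, hzu, hzw⟩ := sep_hits' hTmin.1 (A1.map (homInduce G s))
    replace hz : z ∈ A1.support.map (homInduce G s) := by rw [← Walk.support_map]; exact hz
    obtain ⟨y, hy, rfl⟩ := List.mem_map.mp hz
    exact ⟨y, hy, hzT, fun e => hzu (by subst e; rfl), fun e => hzw (by subst e; rfl)⟩
  have hit2 : ∃ y : ↥s, y ∈ A2.support ∧ ↑y ∈ T ∧ y ≠ u ∧ y ≠ w := by
    obtain ⟨z, hz, hzT, hzu, hzw⟩ := sep_hits' hTmin.1 ((A2.map (homInduce G s)).reverse)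
    replace hz : z ∈ A2.support.map (homInduce G s) := by
      rw [← Walk.support_map, ← List.mem_reverse, ← Walk.support_reverse]; exact hz
    obtain ⟨y, hy, rfl⟩ := List.mem_map.mp hz
    exact ⟨y, hy, hzT, fun e => hzu (by subst e; rfl), fun e => hzw (by subst e; rfl)⟩
  obtain ⟨y₁, hy1, hy1T, hy1u, hy1w⟩ := hit1
  obtain ⟨y₂, hy2, hy2T, hy2u, hy2w⟩ := hit2
  have hy1c : y₁ ∈ c.support := hmemc' _ (c'.support_takeUntil_subset hw'_mem hy1)
  have hy2c : y₂ ∈ c.support := hmemc' _ (c'.support_dropUntil_subset hw'_mem hy2)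
  have hnv1 : ¬ (G.induce s).Adj v y₁ := fun hadj =>
    (hTsub hy1T) (Or.inr (Or.inr ⟨y₁, hy1c, hadj, rfl⟩))
  have hnv2 : ¬ (G.induce s).Adj v y₂ := fun hadj =>
    (hTsub hy2T) (Or.inr (Or.inr ⟨y₂, hy2c, hadj, rfl⟩))
  have hne_v1 : (↑v : V) ≠ ↑y₁ := fun e =>
    hv (by rw [show v = y₁ from Subtype.coe_injective e]; exact hy1c)
  have hne_v2 : (↑v : V) ≠ ↑y₂ := fun e =>
    hv (by rw [show v = y₂ from Subtype.coe_injective e]; exact hy2c)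
  have hne_12 : (↑y₁ : V) ≠ ↑y₂ := by
    intro e
    have h1 : y₁ = y₂ := Subtype.coe_injective e
    rcases inter y₁ hy1 (h1 ▸ hy2) with h | h
    · exact hy1u h
    · exact hy1w h
  have hnadj12 : ¬ G.Adj ↑y₁ ↑y₂ := by
    intro h
    have h' : (G.induce s).Adj y₁ y₂ := h
    have he := hchord y₁ y₂ hy1c hy2c h'
    rcases hedges _ he with he' | he'
    · rcases inter y₂ (A1.snd_mem_support_of_mem_edges he') hy2 with h2 | h2
      · exact hy2u h2
      · exact hy2w h2
    · rcases inter y₁ hy1 (A2.fst_mem_support_of_mem_edges he') with h2 | h2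
      · exact hy1u h2
      · exact hy1w h2
  exact two_cliques_pigeonhole hTuc hvT hy1T hy2T hne_v1 hne_v2 hne_12
    (fun h => hnv1 h) (fun h => hnv2 h) hnadj12

/-- every diamond-free graph in `𝒢_2` is (theta, pyramid, long prism,
wheel)-free. -/
theorem statement_16 (V : Type) [Finite V] (G : SimpleGraph V)
    (hdf : DiamondFree G) (hG : MemGk 2 G) (s : Set V) :
    ¬ IsTheta (G.induce s) ∧ ¬ IsPyramid (G.induce s) ∧
    ¬ IsLongPrism (G.induce s) ∧ ¬ IsWheel (G.induce s) := by
  exact ⟨no_theta hG s, no_pyramid hG s, no_long_prism hG s, no_wheel hdf hG s⟩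

end PaperSep
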